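/- arXiv:1306.2104 — 2 statements merged into one kernel-verified Lean document; each statement's English description precedes it below -/
import Mathlib

section
/- Let K ⊆ ℝ^d be a closed convex set, let C be a convex set, and let h = {x : f x = c} be a hyperplane with f linear and nonzero. Set C₁ = {x ∈ C : f x < c}, C₂ = {x ∈ C : f x > c}, and F = C ∩ h. If F ∩ K = ∅, then it is not possible that both C₁ ∩ frontier K ≠ ∅ and C₂ ∩ frontier K ≠ ∅. -/
theorem facet_claim {d : ℕ}
    (K C : Set (EuclideanSpace ℝ (Fin d)))
    (hKconv : Convex ℝ K) (hKclosed : IsClosed K)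
    (hCconv : Convex ℝ C)
    (f : EuclideanSpace ℝ (Fin d) →ₗ[ℝ] ℝ) (hf : f ≠ 0) (c : ℝ)
    (C₁ C₂ F : Set (EuclideanSpace ℝ (Fin d)))
    (hC₁ : C₁ = {x ∈ C | f x < c})
    (hC₂ : C₂ = {x ∈ C | c < f x})
    (hF : F = C ∩ {x | f x = c})
    (hFK : F ∩ K = ∅) :
    ¬ ((C₁ ∩ frontier K).Nonempty ∧ (C₂ ∩ frontier K).Nonempty) := by
  rintro ⟨⟨x, hx1, hxf⟩, ⟨y, hy2, hyf⟩⟩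
  rw [hC₁] at hx1; rw [hC₂] at hy2
  obtain ⟨hxC, hxlt⟩ := hx1
  obtain ⟨hyC, hygt⟩ := hy2
  have hxK : x ∈ K := hKclosed.frontier_subset hxf
  have hyK : y ∈ K := hKclosed.frontier_subset hyf
  have hlt : f x < f y := hxlt.trans hygt
  set t : ℝ := (c - f x) / (f y - f x) with ht
  have hden : 0 < f y - f x := sub_pos.mpr hlt
  have ht0 : 0 ≤ t := div_nonneg (sub_nonneg.mpr hxlt.le) hden.le
  have ht1 : t ≤ 1 := by
    rw [div_le_one hden]; linarith
  set z := (1 - t) • x + t • y with hz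
  have hzC : z ∈ C := hCconv hxC hyC (by linarith) ht0 (by ring)
  have hzK : z ∈ K := hKconv hxK hyK (by linarith) ht0 (by ring)
  have hfz : f z = c := by
    have : t * (f y - f x) = c - f x := div_mul_cancel₀ _ hden.ne'
    simp only [hz, map_add, map_smul, smul_eq_mul]
    nlinarith [this]
  have : z ∈ F ∩ K := ⟨hF ▸ ⟨hzC, hfz⟩, hzK⟩
  rw [hFK] at this
  exact this
end

section
/- Let C₁, C₂ be disjoint open convex sets in ℝ^d and h = {x : f x = c} a hyperplane with C₁ ⊆ {f < c} and C₂ ⊆ {f > c}. Let F ⊆ h be a relatively open convex set such that C₁ ∪ F ∪ C₂ is convex. If K ⊆ ℝ^d is closed and convex, F ∩ K = ∅, and there exist x₁ ∈ C₁ ∩ frontier K and x₂ ∈ C₂ ∩ frontier K, then we reach a contradiction; i.e., such x₁, x₂ cannot both exist. -/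
theorem no_shared_facet {d : ℕ}
    (C₁ C₂ : Set (EuclideanSpace ℝ (Fin d)))
    (hC₁open : IsOpen C₁) (hC₂open : IsOpen C₂)
    (hC₁conv : Convex ℝ C₁) (hC₂conv : Convex ℝ C₂)
    (hdisj : Disjoint C₁ C₂)
    (f : EuclideanSpace ℝ (Fin d) →ₗ[ℝ] ℝ) (hf : f ≠ 0) (c : ℝ)
    (h : Set (EuclideanSpace ℝ (Fin d))) (hh : h = {x | f x = c})
    (hC₁side : C₁ ⊆ {x | f x < c}) (hC₂side : C₂ ⊆ {x | c < f x})
    (F : Set (EuclideanSpace ℝ (Fin d))) (hFh : F ⊆ h)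
    (hFconv : Convex ℝ F)
    (hFopen : ∃ U : Set (EuclideanSpace ℝ (Fin d)), IsOpen U ∧ F = U ∩ h)
    (hunion : Convex ℝ (C₁ ∪ F ∪ C₂))
    (K : Set (EuclideanSpace ℝ (Fin d)))
    (hKclosed : IsClosed K) (hKconv : Convex ℝ K)
    (hFK : F ∩ K = ∅) :
    ¬ ((C₁ ∩ frontier K).Nonempty ∧ (C₂ ∩ frontier K).Nonempty) := by
  rintro ⟨⟨x₁, hx₁C, hx₁K⟩, ⟨x₂, hx₂C, hx₂K⟩⟩
  have hK₁ : x₁ ∈ K := by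
    have := frontier_subset_closure hx₁K
    rwa [hKclosed.closure_eq] at this
  have hK₂ : x₂ ∈ K := by
    have := frontier_subset_closure hx₂K
    rwa [hKclosed.closure_eq] at this
  have h₁ : f x₁ < c := hC₁side hx₁C
  have h₂ : c < f x₂ := hC₂side hx₂C
  have hne : f x₂ - f x₁ > 0 := by linarith
  set t : ℝ := (c - f x₁) / (f x₂ - f x₁) with ht
  have ht0 : 0 ≤ t := div_nonneg (by linarith) (le_of_lt hne)
  have ht1 : t ≤ 1 := by
    rw [div_le_one hne]; linarith
  set y := (1 - t) • x₁ + t • x₂ with hy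
  have hsum : (1 - t) + t = 1 := by ring
  have hyK : y ∈ K := hKconv hK₁ hK₂ (by linarith) ht0 hsum
  have hyU : y ∈ C₁ ∪ F ∪ C₂ :=
    hunion (Or.inl (Or.inl hx₁C)) (Or.inr hx₂C) (by linarith) ht0 hsum
  have hfy : f y = c := by
    have : f y = (1 - t) * f x₁ + t * f x₂ := by
      simp [hy, map_add, map_smul, smul_eq_mul]
    rw [this, ht]
    field_simp
    ring
  rcases hyU with (hC | hF) | hC
  · have := hC₁side hC; simp only [Set.mem_setOf_eq] at this; linarith
  · have : y ∈ F ∩ K := ⟨hF, hyK⟩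
    rw [hFK] at this; exact this
  · have := hC₂side hC; simp only [Set.mem_setOf_eq] at this; linarith
end
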